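/- For λ ∈ ℂ with |λ| > 1, the multiplication operator M_λ : f ↦ λ·f on the Fréchet space H(ℂ) of entire functions (with the compact-open topology) does not have the positive shadowing property. -/

import Mathlib

open Filter
open scoped NNReal ENNReal

/-- The k-th seminorm on entire functions: sup of ‖f z‖ on the ball of radius k. -/
noncomputable def entireSeminorm (k : ℕ) (f : ℂ → ℂ) : ℝ :=
  sSup ((fun z => ‖f z‖) '' Metric.ball (0 : ℂ) k)

/-- The canonical complete invariant metric on H(ℂ). -/
noncomputable def entireDist (f g : ℂ → ℂ) : ℝ :=
  ∑' k : ℕ, (1 / 2 : ℝ) ^ (k + 1) * min 1 (entireSeminorm (k + 1) (fun z => f z - g z))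

lemma entireSeminorm_nonneg (k : ℕ) (f : ℂ → ℂ) : 0 ≤ entireSeminorm k f :=
  Real.sSup_nonneg (by rintro x ⟨z, _, rfl⟩; exact norm_nonneg _)

lemma term_nonneg (f g : ℂ → ℂ) (k : ℕ) :
    0 ≤ (1 / 2 : ℝ) ^ (k + 1) * min 1 (entireSeminorm (k + 1) (fun z => f z - g z)) :=
  mul_nonneg (by positivity) (le_min zero_le_one (entireSeminorm_nonneg _ _))

lemma halfpow_summable : Summable (fun k : ℕ => (1 / 2 : ℝ) ^ (k + 1)) := by
  have h := (summable_geometric_of_lt_one (by norm_num) (by norm_num : (1/2:ℝ) < 1)).mul_right (1/2)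
  exact h.congr fun k => (pow_succ _ _).symm

lemma halfpow_tsum : ∑' k : ℕ, (1 / 2 : ℝ) ^ (k + 1) = 1 := by
  have h := tsum_geometric_of_lt_one (by norm_num) (by norm_num : (1/2:ℝ) < 1)
  have h2 : ∑' k : ℕ, (1 / 2 : ℝ) ^ (k + 1) = ∑' k : ℕ, (1/2:ℝ) ^ k * (1/2) :=
    tsum_congr fun k => pow_succ _ _
  rw [h2, tsum_mul_right, h]; norm_num

lemma entireDist_summable (f g : ℂ → ℂ) :
    Summable (fun k : ℕ => (1 / 2 : ℝ) ^ (k + 1) * min 1 (entireSeminorm (k + 1) (fun z => f z - g z))) := by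
  refine Summable.of_nonneg_of_le (term_nonneg f g) (fun k => ?_) halfpow_summable
  exact mul_le_of_le_one_right (by positivity) (min_le_left _ _)

lemma le_entireDist (f g : ℂ → ℂ) :
    (1 / 2 : ℝ) * min 1 (entireSeminorm 1 (fun z => f z - g z)) ≤ entireDist f g := by
  have h := Summable.le_tsum (entireDist_summable f g) 0 (fun i _ => term_nonneg f g i)
  simpa [entireDist] using h

lemma entireSeminorm_monomial_le (c : ℂ) (n k : ℕ) :
    entireSeminorm k (fun z => c * z ^ n) ≤ ‖c‖ * (k : ℝ) ^ n := by
  apply Real.sSup_le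
  · rintro x ⟨z, hz, rfl⟩
    have hzk : ‖z‖ ≤ (k : ℝ) := by
      have := Metric.mem_ball.mp hz
      rw [dist_zero_right] at this
      exact this.le
    simp only [norm_mul, norm_pow]
    exact mul_le_mul_of_nonneg_left (pow_le_pow_left₀ (norm_nonneg z) hzk n) (norm_nonneg c)
  · positivity

lemma norm_le_entireSeminorm {h : ℂ → ℂ} (hc : Continuous h) {k : ℕ} {z : ℂ} (hz : ‖z‖ < k) :
    ‖h z‖ ≤ entireSeminorm k h := by
  apply le_csSup
  · exact (((isCompact_closedBall (0:ℂ) k).bddAbove_image (hc.norm.continuousOn)).mono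
      (Set.image_mono Metric.ball_subset_closedBall))
  · exact ⟨z, by simpa [Metric.mem_ball, dist_zero_right] using hz, rfl⟩

lemma entireDist_le_of_monomial (F G : ℂ → ℂ) (c : ℂ) (n M : ℕ) (δ : ℝ)
    (hM : 1 ≤ M)
    (hFG : ∀ z, F z - G z = c * z ^ n)
    (h1 : ‖c‖ * (M : ℝ) ^ n ≤ δ / 2) (h2 : ((1:ℝ)/2) ^ M ≤ δ / 2) :
    entireDist F G ≤ δ := by
  have hsum := entireDist_summable F G
  have hsplit := Summable.sum_add_tsum_nat_add (f := fun k : ℕ =>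
      (1 / 2 : ℝ) ^ (k + 1) * min 1 (entireSeminorm (k + 1) (fun z => F z - G z))) M hsum
  rw [entireDist, ← hsplit]
  have hhead : ∑ k ∈ Finset.range M,
      (1 / 2 : ℝ) ^ (k + 1) * min 1 (entireSeminorm (k + 1) (fun z => F z - G z)) ≤ δ / 2 := by
    have hterm : ∀ k ∈ Finset.range M,
        (1 / 2 : ℝ) ^ (k + 1) * min 1 (entireSeminorm (k + 1) (fun z => F z - G z)) ≤
        (1 / 2 : ℝ) ^ (k + 1) * (δ / 2) := by
      intro k hk
      have hkM : (k : ℕ) + 1 ≤ M := Finset.mem_range.mp hk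
      have hs : entireSeminorm (k + 1) (fun z => F z - G z) ≤ δ / 2 := by
        have e1 : entireSeminorm (k + 1) (fun z => F z - G z) =
            entireSeminorm (k + 1) (fun z => c * z ^ n) := by
          unfold entireSeminorm
          congr 1
          ext x
          constructor
          · rintro ⟨z, hz, rfl⟩; exact ⟨z, hz, by simp only []; rw [hFG z]⟩
          · rintro ⟨z, hz, rfl⟩; exact ⟨z, hz, by simp only []; rw [hFG z]⟩
        rw [e1]
        refine le_trans (entireSeminorm_monomial_le c n (k+1)) (le_trans ?_ h1)
        have : ((k:ℝ) + 1) ≤ (M : ℝ) := by exact_mod_cast hkM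
        have hc := norm_nonneg c
        have := pow_le_pow_left₀ (by positivity : (0:ℝ) ≤ (k:ℝ)+1) (by push_cast; linarith : ((k:ℝ)+1) ≤ (M:ℝ)) n
        push_cast
        nlinarith [pow_nonneg (by positivity : (0:ℝ) ≤ (k:ℝ)+1) n]
      calc (1 / 2 : ℝ) ^ (k + 1) * min 1 (entireSeminorm (k + 1) (fun z => F z - G z))
          ≤ (1 / 2 : ℝ) ^ (k + 1) * (entireSeminorm (k + 1) (fun z => F z - G z)) :=
            mul_le_mul_of_nonneg_left (min_le_right _ _) (by positivity)
        _ ≤ (1 / 2 : ℝ) ^ (k + 1) * (δ / 2) :=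
            mul_le_mul_of_nonneg_left hs (by positivity)
    calc ∑ k ∈ Finset.range M, (1 / 2 : ℝ) ^ (k + 1) * min 1 (entireSeminorm (k + 1) (fun z => F z - G z))
        ≤ ∑ k ∈ Finset.range M, (1 / 2 : ℝ) ^ (k + 1) * (δ / 2) := Finset.sum_le_sum hterm
      _ = (∑ k ∈ Finset.range M, (1 / 2 : ℝ) ^ (k + 1)) * (δ / 2) := by rw [Finset.sum_mul]
      _ ≤ 1 * (δ / 2) := by
          have hδ0 : (0:ℝ) ≤ δ / 2 := by
            have := (norm_nonneg c).trans (le_trans (le_mul_of_one_le_right (norm_nonneg c)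
              (one_le_pow₀ (by exact_mod_cast hM))) h1)
            linarith
          refine mul_le_mul_of_nonneg_right ?_ hδ0
          have := Summable.sum_le_tsum (Finset.range M) (fun k _ => by positivity) halfpow_summable
          rw [halfpow_tsum] at this
          exact this
      _ = δ / 2 := one_mul _
  have htail : (∑' k : ℕ, (1 / 2 : ℝ) ^ ((k + M) + 1) *
      min 1 (entireSeminorm ((k + M) + 1) (fun z => F z - G z))) ≤ δ / 2 := by
    have hb : ∀ k : ℕ, (1 / 2 : ℝ) ^ ((k + M) + 1) *
        min 1 (entireSeminorm ((k + M) + 1) (fun z => F z - G z)) ≤ (1/2:ℝ)^M * (1/2:ℝ)^(k+1) := by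
      intro k
      have : (1 / 2 : ℝ) ^ ((k + M) + 1) = (1/2:ℝ)^M * (1/2:ℝ)^(k+1) := by ring
      rw [this]
      refine mul_le_of_le_one_right (by positivity) (min_le_left _ _)
    have hsum2 : Summable (fun k : ℕ => (1/2:ℝ)^M * (1/2:ℝ)^(k+1)) := halfpow_summable.mul_left _
    calc (∑' k : ℕ, (1 / 2 : ℝ) ^ ((k + M) + 1) *
        min 1 (entireSeminorm ((k + M) + 1) (fun z => F z - G z)))
        ≤ ∑' k : ℕ, (1/2:ℝ)^M * (1/2:ℝ)^(k+1) := by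
          exact Summable.tsum_le_tsum hb ((summable_nat_add_iff M).mpr hsum) hsum2
      _ = (1/2:ℝ)^M * 1 := by rw [tsum_mul_left, halfpow_tsum]
      _ ≤ δ / 2 := by rw [mul_one]; exact h2
  linarith


/-- For |λ| > 1, the multiplication operator M_λ on H(ℂ) does not have the
positive shadowing property. -/
theorem stmt2 (l : ℂ) (hl : 1 < ‖l‖) :
    ¬ (∀ ε > (0 : ℝ), ∃ δ > (0 : ℝ), ∀ F : ℕ → (ℂ → ℂ),
        (∀ j, Differentiable ℂ (F j)) →
        (∀ j, entireDist (fun z => l * F j z) (F (j + 1)) ≤ δ) →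
        ∃ f : ℂ → ℂ, Differentiable ℂ f ∧
          ∀ j, entireDist (F j) (fun z => l ^ j * f z) < ε) := by
  intro H
  obtain ⟨δ, hδ, hshad⟩ := H (1/4) (by norm_num)
  -- choose M
  obtain ⟨M0, hM0⟩ : ∃ n : ℕ, ((1:ℝ)/2) ^ n < δ / 2 :=
    exists_pow_lt_of_lt_one (by positivity) (by norm_num)
  set M : ℕ := max M0 1 with hMdef
  have hM1 : 1 ≤ M := le_max_right _ _
  have hM2 : ((1:ℝ)/2) ^ M ≤ δ / 2 :=
    (pow_le_pow_of_le_one (by norm_num) (by norm_num) (le_max_left _ _)).trans hM0.le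
  set δ' : ℝ := min δ 1 with hδ'def
  have hδ'0 : 0 < δ' := lt_min hδ one_pos
  have hδ'δ : δ' ≤ δ := min_le_left _ _
  have hδ'1 : δ' ≤ 1 := min_le_right _ _
  set Q : ℝ := ‖l‖ * M with hQdef
  have hQ1 : 1 < Q := by
    have : (1:ℝ) ≤ (M:ℝ) := by exact_mod_cast hM1
    calc (1:ℝ) < ‖l‖ := hl
      _ = ‖l‖ * 1 := (mul_one _).symm
      _ ≤ ‖l‖ * M := by nlinarith
  have hQ0 : 0 < Q := lt_trans one_pos hQ1
  set a : ℕ → ℝ := fun i => (δ' / 2) / Q ^ (i + 1) with hadef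
  have ha_pos : ∀ i, 0 < a i := fun i => div_pos (by linarith) (pow_pos hQ0 _)
  have haQ : ∀ i, a i * Q ^ (i + 1) = δ' / 2 := fun i =>
    div_mul_cancel₀ _ (by positivity)
  have ha_le : ∀ i, a i ≤ δ' / 2 := by
    intro i
    rw [hadef]
    refine div_le_self (by linarith) (one_le_pow₀ hQ1.le)
  set F : ℕ → ℂ → ℂ := fun j z => l ^ j * ∑ i ∈ Finset.range j, (a i : ℂ) * z ^ (i + 1)
    with hFdef
  have hFdiff : ∀ j, Differentiable ℂ (F j) := by
    intro j
    apply Differentiable.const_mul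
    apply Differentiable.fun_sum
    intro i _
    exact (differentiable_pow (i+1)).const_mul _
  have hpseudo : ∀ j, entireDist (fun z => l * F j z) (F (j + 1)) ≤ δ := by
    intro j
    refine entireDist_le_of_monomial _ _ (-(l ^ (j + 1) * (a j : ℂ))) (j + 1) M δ hM1 ?_ ?_ hM2
    · intro z
      simp only [hFdef, Finset.sum_range_succ]
      push_cast
      ring
    · have hnorm : ‖-(l ^ (j + 1) * (a j : ℂ))‖ = ‖l‖ ^ (j + 1) * a j := by
        rw [norm_neg, norm_mul, norm_pow, Complex.norm_real, Real.norm_eq_abs,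
          abs_of_pos (ha_pos j)]
      rw [hnorm]
      have : ‖l‖ ^ (j + 1) * a j * (M : ℝ) ^ (j + 1) = a j * Q ^ (j + 1) := by
        rw [hQdef, mul_pow]; ring
      rw [this, haQ j]
      linarith
  obtain ⟨f, hfdiff, hdist⟩ := hshad F hFdiff hpseudo
  -- pointwise bound on the unit ball
  have hptwise : ∀ j : ℕ, ∀ z : ℂ, ‖z‖ < 1 →
      ‖F j z - l ^ j * f z‖ ≤ 1 / 2 := by
    intro j z hz
    have hcont : Continuous (fun z => F j z - l ^ j * f z) :=
      ((hFdiff j).continuous).sub (continuous_const.mul hfdiff.continuous)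
    have h6 : ‖F j z - l ^ j * f z‖ ≤ entireSeminorm 1 (fun z => F j z - l ^ j * f z) := by
      refine norm_le_entireSeminorm hcont ?_
      simpa using hz
    have h5 := le_entireDist (F j) (fun z => l ^ j * f z)
    have hd := hdist j
    have hmin : min 1 (entireSeminorm 1 (fun z => F j z - l ^ j * f z)) < 1 / 2 := by linarith
    rcases min_lt_iff.mp hmin with h | h
    · norm_num at h
    · linarith
  -- f equals the power series on the unit ball
  have hhs : ∀ z : ℂ, ‖z‖ < 1 → HasSum (fun i => (a i : ℂ) * z ^ (i + 1)) (f z) := by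
    intro z hz
    have hsml : Summable (fun i => (a i : ℂ) * z ^ (i + 1)) := by
      apply Summable.of_norm
      have hgeo : Summable (fun i : ℕ => (δ' / 2 * Q⁻¹) * (Q⁻¹) ^ i) :=
        (summable_geometric_of_lt_one (by positivity)
          (by rw [inv_lt_one_iff₀]; right; exact hQ1)).mul_left _
      refine Summable.of_nonneg_of_le (fun i => norm_nonneg _) (fun i => ?_) hgeo
      have he : ‖(a i : ℂ) * z ^ (i + 1)‖ = a i * ‖z‖ ^ (i + 1) := by
        rw [norm_mul, norm_pow, Complex.norm_real, Real.norm_eq_abs, abs_of_pos (ha_pos i)]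
      rw [he]
      have h1 : a i = (δ' / 2 * Q⁻¹) * (Q⁻¹) ^ i := by
        have h3 : a i = δ' / 2 * (Q⁻¹) ^ (i + 1) := by
          simp only [hadef]
          rw [inv_pow, div_eq_mul_inv (δ' / 2)]
        rw [h3, pow_succ]
        ring
      have h2 : ‖z‖ ^ (i + 1) ≤ 1 := pow_le_one₀ (norm_nonneg _) hz.le
      calc a i * ‖z‖ ^ (i + 1) ≤ a i * 1 :=
            mul_le_mul_of_nonneg_left h2 (ha_pos i).le
        _ = a i := mul_one _
        _ = (δ' / 2 * Q⁻¹) * (Q⁻¹) ^ i := h1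
    have hS := hsml.hasSum
    have htend1 : Filter.Tendsto (fun j => ∑ i ∈ Finset.range j, (a i : ℂ) * z ^ (i + 1))
        Filter.atTop (nhds (∑' i, (a i : ℂ) * z ^ (i + 1))) := hS.tendsto_sum_nat
    have htend2 : Filter.Tendsto (fun j => ∑ i ∈ Finset.range j, (a i : ℂ) * z ^ (i + 1))
        Filter.atTop (nhds (f z)) := by
      rw [tendsto_iff_norm_sub_tendsto_zero]
      have hb : ∀ j : ℕ, ‖(∑ i ∈ Finset.range j, (a i : ℂ) * z ^ (i + 1)) - f z‖ ≤
          (1/2) / ‖l‖ ^ j := by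
        intro j
        have h := hptwise j z hz
        have : F j z - l ^ j * f z =
            l ^ j * ((∑ i ∈ Finset.range j, (a i : ℂ) * z ^ (i + 1)) - f z) := by
          simp only [hFdef]; ring
        rw [this, norm_mul, norm_pow] at h
        have hlj : (0:ℝ) < ‖l‖ ^ j := pow_pos (by linarith) _
        rw [le_div_iff₀ hlj]
        rw [mul_comm] at h
        exact h
      refine squeeze_zero (fun j => norm_nonneg _) hb ?_
      have h0 : Filter.Tendsto (fun j : ℕ => (‖l‖⁻¹) ^ j) Filter.atTop (nhds 0) := by
        apply tendsto_pow_atTop_nhds_zero_of_lt_one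
        · positivity
        · rw [inv_lt_one_iff₀]; right; exact hl
      have := h0.const_mul (1/2:ℝ)
      simp only [mul_zero] at this
      refine this.congr fun j => ?_
      rw [inv_pow]
      ring
    have := tendsto_nhds_unique htend1 htend2
    rw [← this]
    exact hS
  -- the formal power series
  set b : ℕ → ℂ := fun n => match n with | 0 => 0 | (i+1) => (a i : ℂ) with hbdef
  set p : FormalMultilinearSeries ℂ ℂ ℂ := FormalMultilinearSeries.ofScalars ℂ b with hpdef
  have hpn : ∀ n, ‖p n‖ = ‖b n‖ := fun n => FormalMultilinearSeries.ofScalars_norm ℂ b n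
  have hbnorm : ∀ i, ‖b (i+1)‖ = a i := by
    intro i
    show ‖(a i : ℂ)‖ = a i
    rw [Complex.norm_real, Real.norm_eq_abs, abs_of_pos (ha_pos i)]
  have hble : ∀ n, ‖b n‖ ≤ 1 := by
    intro n
    match n with
    | 0 => show ‖(0:ℂ)‖ ≤ 1; simp
    | (i+1) => rw [hbnorm i]; linarith [ha_le i, hδ'1]
  have hp1 : HasFPowerSeriesOnBall f p 0 1 := by
    refine ⟨?_, one_pos, ?_⟩
    · refine p.le_radius_of_bound 1 (fun n => ?_)
      rw [hpn]
      simp only [NNReal.coe_one, one_pow, mul_one]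
      exact hble n
    · intro y hy
      rw [mem_emetric_ball_zero_iff] at hy
      have hy1 : ‖y‖ < 1 := by rw [← ofReal_norm_eq_enorm] at hy; exact ENNReal.ofReal_lt_one.mp hy
      rw [zero_add]
      have h := hhs y hy1
      have h2 : HasSum (fun i : ℕ => b (i + 1) * y ^ (i + 1)) (f y) := h
      have h3 := (hasSum_nat_add_iff (f := fun n => b n * y ^ n) 1).mp h2
      have h4 : f y + ∑ i ∈ Finset.range 1, b i * y ^ i = f y := by
        simp only [Finset.sum_range_one, pow_zero, mul_one]
        show f y + (0:ℂ) = f y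
        rw [add_zero]
      rw [h4] at h3
      refine h3.congr_fun fun n => ?_
      rw [hpdef, FormalMultilinearSeries.ofScalars_apply_eq, smul_eq_mul]
  have hq := hfdiff.hasFPowerSeriesOnBall (0:ℂ) (R := 1) (by norm_num : (0:ℝ≥0) < 1)
  have hpq : p = cauchyPowerSeries f 0 1 :=
    hp1.hasFPowerSeriesAt.eq_formalMultilinearSeries hq.hasFPowerSeriesAt
  have hrad : p.radius = ⊤ := by
    rw [hpq]
    exact top_le_iff.mp hq.r_le
  set R : ℝ≥0 := ⟨2 * Q, by positivity⟩ with hRdef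
  obtain ⟨C, hC, hbd⟩ := p.norm_mul_pow_le_of_lt_radius
    (r := R) (by rw [hrad]; exact ENNReal.coe_lt_top)
  obtain ⟨i, hi⟩ := pow_unbounded_of_one_lt (C / (δ' / 2)) (by norm_num : (1:ℝ) < 2)
  have hkey := hbd (i + 1)
  rw [hpn, hbnorm] at hkey
  have hRcoe : (R : ℝ) = 2 * Q := rfl
  have heq : a i * (R : ℝ) ^ (i + 1) = δ' / 2 * 2 ^ (i + 1) := by
    rw [hRcoe, mul_pow, ← mul_assoc, mul_comm (a i) ((2:ℝ) ^ (i+1)), mul_assoc, haQ i]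
    ring
  rw [heq] at hkey
  have hi2 : C < δ' / 2 * 2 ^ i := by
    rw [div_lt_iff₀ (by linarith : (0:ℝ) < δ' / 2)] at hi
    linarith [hi]
  have : δ' / 2 * 2 ^ i ≤ δ' / 2 * 2 ^ (i + 1) := by
    have : (2:ℝ) ^ i ≤ 2 ^ (i+1) := by
      apply pow_le_pow_right₀ (by norm_num)
      omega
    nlinarith
  linarith
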